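/- Let ∇ be the torsion-free connection on ℝ² whose Christoffel symbols Γ_{ij}^k (1 ≤ i,j,k ≤ 2, with Γ_{ij}^k = Γ_{ji}^k) are real constants, and let ρ_{jk} = Σ_{i,p} (Γ_{ip}^i Γ_{jk}^p − Γ_{jp}^i Γ_{ik}^p) be its Ricci tensor. Then ρ is symmetric, with ρ₁₁ = (Γ₁₁¹ − Γ₁₂²)Γ₁₂² + Γ₁₁²(Γ₂₂² − Γ₁₂¹), ρ₁₂ = ρ₂₁ = Γ₁₂¹Γ₁₂² − Γ₁₁²Γ₂₂¹, and ρ₂₂ = −(Γ₁₂¹)² + Γ₂₂²Γ₁₂¹ + (Γ₁₁¹ − Γ₁₂²)Γ₂₂¹; moreover the covariant derivative ∇ρ, whose components are ρ_{jk;i} = −Σ_l (Γ_{ij}^l ρ_{lk} + Γ_{ik}^l ρ_{jl}), is totally symmetric in the three indices (i,j,k). -/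
import Mathlib


noncomputable section

/-- Ricci tensor of the Type A connection on ℝ² with constant Christoffel symbols
`Γ i j k = Γ_{ij}^k`:  `ρ_{jk} = Σ_{i,p} (Γ_{ip}^i Γ_{jk}^p − Γ_{jp}^i Γ_{ik}^p)`. -/
def ricciA (Γ : Fin 2 → Fin 2 → Fin 2 → ℝ) (j k : Fin 2) : ℝ :=
  ∑ i, ∑ q, (Γ i q i * Γ j k q - Γ j q i * Γ i k q)

/-- Components `ρ_{jk;i}` of the covariant derivative of the Ricci tensor; for constant
Christoffel symbols `ρ_{jk;i} = −Σ_l (Γ_{ij}^l ρ_{lk} + Γ_{ik}^l ρ_{jl})`. -/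
def nablaRicciA (Γ : Fin 2 → Fin 2 → Fin 2 → ℝ) (i j k : Fin 2) : ℝ :=
  -∑ l, (Γ i j l * ricciA Γ l k + Γ i k l * ricciA Γ j l)

/-- for a Type A connection the Ricci tensor is symmetric, with the stated
explicit components, and its covariant derivative is totally symmetric in `(i,j,k)`. -/
theorem stmt0 (Γ : Fin 2 → Fin 2 → Fin 2 → ℝ)
    (hΓ : ∀ i j k, Γ i j k = Γ j i k) :
    (∀ j k, ricciA Γ j k = ricciA Γ k j) ∧
    ricciA Γ 0 0 = (Γ 0 0 0 - Γ 0 1 1) * Γ 0 1 1 + Γ 0 0 1 * (Γ 1 1 1 - Γ 0 1 0) ∧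
    ricciA Γ 0 1 = Γ 0 1 0 * Γ 0 1 1 - Γ 0 0 1 * Γ 1 1 0 ∧
    ricciA Γ 1 0 = Γ 0 1 0 * Γ 0 1 1 - Γ 0 0 1 * Γ 1 1 0 ∧
    ricciA Γ 1 1 = -(Γ 0 1 0) ^ 2 + Γ 1 1 1 * Γ 0 1 0 + (Γ 0 0 0 - Γ 0 1 1) * Γ 1 1 0 ∧
    (∀ i j k, nablaRicciA Γ i j k = nablaRicciA Γ j i k ∧
      nablaRicciA Γ i j k = nablaRicciA Γ i k j) := by
  have h10 := hΓ 1 0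
  
  constructor
  · intro j k
    fin_cases j <;> fin_cases k <;>
      simp [ricciA, Fin.sum_univ_two, h10 0, h10 1] <;> ring
  refine ⟨?_, ?_, ?_, ?_, ?_⟩
  · simp [ricciA, Fin.sum_univ_two, h10 0, h10 1]; ring
  · simp [ricciA, Fin.sum_univ_two, h10 0, h10 1]; ring
  · simp [ricciA, Fin.sum_univ_two, h10 0, h10 1]; ring
  · simp [ricciA, Fin.sum_univ_two, h10 0, h10 1]; ring
  · intro i j k
    fin_cases i <;> fin_cases j <;> fin_cases k <;>
      constructor <;>
      simp [nablaRicciA, ricciA, Fin.sum_univ_two, h10 0, h10 1] <;> ring
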